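/- Let X be a random variable with log-concave density f on [-1,1] and E[X] = 0. Then the truncated mean satisfies m_X(t) ≤ (1+t)/2 for all t in [-1,1). -/

import Mathlib

open MeasureTheory Set

section Aux

theorem TML.antitone_refl (f : ℝ → ℝ) (a b m : ℝ) (hab : a ≤ b) (hm : m = (a+b)/2)
    (hmono : ∀ x ∈ Icc a b, ∀ y ∈ Icc a b, x ≤ y → f y ≤ f x)
    (hI : IntervalIntegrable (fun x => (x - m) * f x) volume a b) :
    ∫ x in a..b, (x - m) * f x ≤ 0 := by
  have hI2 : IntervalIntegrable (fun x => (x - m) * f ((a+b) - x)) volume a b := by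
    have h0 := (hI.comp_sub_left (a+b)).symm
    rw [show a + b - a = b by ring, show a + b - b = a by ring] at h0
    have heq : (fun x => (x - m) * f ((a+b) - x))
        = fun x => -((a + b - x - m) * f (a + b - x)) := by
      funext x; rw [hm]; ring_nf
    rw [heq]
    exact h0.neg
  have key : ∫ x in a..b, (x - m) * f ((a+b) - x) = - ∫ x in a..b, (x - m) * f x := by
    have h1 := intervalIntegral.integral_comp_sub_left
      (a := a) (b := b) (fun y => (y - m) * f y) (a + b)
    rw [show a + b - a = b by ring, show a + b - b = a by ring] at h1
    calc ∫ x in a..b, (x - m) * f ((a+b) - x)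
        = - ∫ x in a..b, (a + b - x - m) * f (a + b - x) := by
          rw [← intervalIntegral.integral_neg]
          apply intervalIntegral.integral_congr; intro x _
          rw [hm]; ring
      _ = - ∫ x in a..b, (x - m) * f x := by rw [h1]
  have hnn : 0 ≤ ∫ x in a..b, ((x - m) * f ((a+b) - x) - (x - m) * f x) := by
    apply intervalIntegral.integral_nonneg hab
    intro x hx
    have hya : a ≤ a + b - x := by linarith [hx.2]
    have hyb : a + b - x ≤ b := by linarith [hx.1]
    rcases le_total x m with h | h
    · have hxy : x ≤ a + b - x := by rw [hm] at h; linarith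
      have := hmono x hx (a + b - x) ⟨hya, hyb⟩ hxy
      nlinarith
    · have hxy : a + b - x ≤ x := by rw [hm] at h; linarith
      have := hmono (a + b - x) ⟨hya, hyb⟩ x hx hxy
      nlinarith
  rw [intervalIntegral.integral_sub hI2 hI, key] at hnn
  linarith

theorem TML.quasi (f : ℝ → ℝ) (hf_nonneg : ∀ x, 0 ≤ f x)
    (hf_lc : ∀ x ∈ Icc (-1 : ℝ) 1, ∀ y ∈ Icc (-1 : ℝ) 1, ∀ a b : ℝ,
      0 ≤ a → 0 ≤ b → a + b = 1 → f x ^ a * f y ^ b ≤ f (a * x + b * y))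
    (u v w : ℝ) (hu : -1 ≤ u) (huv : u ≤ v) (hvw : v ≤ w) (hw : w ≤ 1) :
    min (f u) (f w) ≤ f v := by
  rcases eq_or_lt_of_le (huv.trans hvw) with heq | hlt
  · have h1 : v = u := le_antisymm (heq ▸ hvw) huv
    rw [h1]; exact min_le_left _ _
  · set a := (w - v) / (w - u) with ha
    set b := (v - u) / (w - u) with hb
    have hwu : (0:ℝ) < w - u := by linarith
    have ha0 : 0 ≤ a := div_nonneg (by linarith) hwu.le
    have hb0 : 0 ≤ b := div_nonneg (by linarith) hwu.le
    have hab : a + b = 1 := by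
      rw [ha, hb, ← add_div, div_eq_one_iff_eq hwu.ne']; ring
    have hv : a * u + b * w = v := by rw [ha, hb]; field_simp; ring
    have h2 := hf_lc u ⟨hu, by linarith⟩ w ⟨by linarith, hw⟩ a b ha0 hb0 hab
    rw [hv] at h2
    refine le_trans ?_ h2
    set m := min (f u) (f w) with hmdef
    have hm0 : 0 ≤ m := le_min (hf_nonneg u) (hf_nonneg w)
    have h3 : m ^ a ≤ f u ^ a := Real.rpow_le_rpow hm0 (min_le_left _ _) ha0
    have h4 : m ^ b ≤ f w ^ b := Real.rpow_le_rpow hm0 (min_le_right _ _) hb0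
    have h5 : m ^ a * m ^ b ≤ f u ^ a * f w ^ b :=
      mul_le_mul h3 h4 (Real.rpow_nonneg hm0 b) (Real.rpow_nonneg (hf_nonneg u) a)
    refine le_trans ?_ h5
    rcases eq_or_lt_of_le hm0 with h0 | h0
    · rw [← h0]
      positivity
    · rw [← Real.rpow_add h0, hab, Real.rpow_one]

theorem TML.conclude (f : ℝ → ℝ) (hfi : Integrable f)
    (hxfi : Integrable (fun x => x * f x))
    (hf_nonneg : ∀ x, 0 ≤ f x) (t : ℝ) (ht0 : -1 ≤ t)
    (hkey : ∫ x in Ioi t, (x - (1+t)/2) * f x ≤ 0) :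
    (∫ x in Ioi t, x * f x) / (∫ x in Ioi t, f x) ≤ (1+t)/2 := by
  have hd0 : 0 ≤ ∫ x in Ioi t, f x :=
    setIntegral_nonneg measurableSet_Ioi (fun x _ => hf_nonneg x)
  have hexp : ∫ x in Ioi t, (x - (1+t)/2) * f x
      = (∫ x in Ioi t, x * f x) - (1+t)/2 * ∫ x in Ioi t, f x := by
    rw [show (fun x => (x - (1+t)/2) * f x)
        = fun x => x * f x - (1+t)/2 * f x from funext (fun x => by ring)]
    rw [integral_sub hxfi.integrableOn ((hfi.integrableOn).const_mul ((1+t)/2)),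
      MeasureTheory.integral_const_mul]
  rcases eq_or_lt_of_le hd0 with h0 | h0
  · rw [← h0, div_zero]; linarith
  · rw [div_le_iff₀ h0]
    rw [hexp] at hkey
    nlinarith

end Aux

theorem TML.lin_int (a b p q : ℝ) :
    ∫ x in a..b, (p * x + q) = p * (b^2 - a^2)/2 + q * (b-a) := by
  rw [intervalIntegral.integral_add ((intervalIntegral.intervalIntegrable_id).const_mul p)
    (intervalIntegrable_const), intervalIntegral.integral_const_mul, integral_id,
    intervalIntegral.integral_const]
  simp [smul_eq_mul]; ring

theorem TML.lin_int_Ioc (a b p q : ℝ) (hab : a ≤ b) :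
    ∫ x in Ioc a b, (p * x + q) = p * (b^2 - a^2)/2 + q * (b-a) := by
  rw [← intervalIntegral.integral_of_le hab, TML.lin_int]

theorem TML.lin_int_Ioo (a b p q : ℝ) (hab : a ≤ b) :
    ∫ x in Ioo a b, (p * x + q) = p * (b^2 - a^2)/2 + q * (b-a) := by
  rw [← integral_Ioc_eq_integral_Ioo, TML.lin_int_Ioc a b p q hab]

theorem TML.lin_int_Icc (a b p q : ℝ) (hab : a ≤ b) :
    ∫ x in Icc a b, (p * x + q) = p * (b^2 - a^2)/2 + q * (b-a) := by
  rw [integral_Icc_eq_integral_Ioc, TML.lin_int_Ioc a b p q hab]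


set_option maxHeartbeats 2000000 in
theorem truncated_mean_le_of_logConcave (f : ℝ → ℝ)
    (hf_nonneg : ∀ x, 0 ≤ f x)
    (hf_supp : ∀ x, x ∉ Icc (-1 : ℝ) 1 → f x = 0)
    (hf_prob : ∫ x, f x = 1)
    (hf_mean : ∫ x, x * f x = 0)
    (hf_lc : ∀ x ∈ Icc (-1 : ℝ) 1, ∀ y ∈ Icc (-1 : ℝ) 1, ∀ a b : ℝ,
      0 ≤ a → 0 ≤ b → a + b = 1 → f x ^ a * f y ^ b ≤ f (a * x + b * y)) :
    ∀ t ∈ Ico (-1 : ℝ) 1,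
      (∫ x in Ioi t, x * f x) / (∫ x in Ioi t, f x) ≤ (1 + t) / 2 := by
  have hfi : Integrable f := by
    by_contra h
    rw [integral_undef h] at hf_prob
    norm_num at hf_prob
  have hxfi : Integrable (fun x => x * f x) := by
    refine (hfi.mono (aestronglyMeasurable_id.mul hfi.1) ?_)
    refine Filter.Eventually.of_forall (fun x => ?_)
    simp only [norm_mul, Real.norm_eq_abs]
    by_cases hx : x ∈ Icc (-1:ℝ) 1
    · have : |x| ≤ 1 := abs_le.mpr ⟨hx.1, hx.2⟩
      nlinarith [abs_nonneg (f x), abs_nonneg x]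
    · simp [hf_supp x hx]
  intro t ht
  obtain ⟨ht1, ht2⟩ := ht
  set c : ℝ := (1 + t)/2 with hc
  -- integrability of the shifted integrand
  have hgi : Integrable (fun x => (x - c) * f x) := by
    have : (fun x => (x - c) * f x) = fun x => x * f x - c * f x := funext (fun x => by ring)
    rw [this]; exact hxfi.sub (hfi.const_mul c)
  -- total integral of shifted integrand
  have hgtot : ∫ x, (x - c) * f x = -c := by
    have : (fun x => (x - c) * f x) = fun x => x * f x - c * f x := funext (fun x => by ring)
    rw [this, integral_sub hxfi (hfi.const_mul c), MeasureTheory.integral_const_mul,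
      hf_mean, hf_prob]
    ring
  apply TML.conclude f hfi hxfi hf_nonneg t ht1
  rw [← hc]
  -- reduce to Ioc t 1
  have hzero : ∫ x in Ioi (1:ℝ), (x - c) * f x = 0 :=
    setIntegral_eq_zero_of_forall_eq_zero (fun x hx => by
      rw [hf_supp x (fun hmem => absurd hmem.2 (not_le.mpr hx)), mul_zero])
  have Ereduce : ∫ x in Ioi t, (x - c) * f x = ∫ x in Ioc t 1, (x - c) * f x := by
    rw [← Ioc_union_Ioi_eq_Ioi ht2.le,
      setIntegral_union (Set.Ioc_disjoint_Ioi le_rfl) measurableSet_Ioi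
        hgi.integrableOn hgi.integrableOn, hzero, add_zero]
  have hlin_int : IntegrableOn (fun x => (1/2 : ℝ) * x + (-c/2)) (Icc (-1) t) :=
    ((continuous_const.mul continuous_id).add continuous_const).integrableOn_Icc
  by_cases hcase : ∀ x ∈ Icc (-1:ℝ) t, f x ≤ 1/2
  · -- Case 1 : f ≤ 1/2 on [-1, t]
    have hsplit : (∫ x in Iic t, (x - c) * f x) + ∫ x in Ioi t, (x - c) * f x = -c := by
      rw [← hgtot]
      simpa [compl_Iic] using
        integral_add_compl (measurableSet_Iic : MeasurableSet (Iic t)) hgi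
    have hzero2 : ∫ x in Iio (-1:ℝ), (x - c) * f x = 0 :=
      setIntegral_eq_zero_of_forall_eq_zero (fun x hx => by
        rw [hf_supp x (fun hmem => absurd hmem.1 (not_le.mpr hx)), mul_zero])
    have hIic : ∫ x in Iic t, (x - c) * f x = ∫ x in Icc (-1) t, (x - c) * f x := by
      rw [← Iio_union_Icc_eq_Iic ht1,
        setIntegral_union ((Set.Iio_disjoint_Ici le_rfl).mono_right Icc_subset_Ici_self) measurableSet_Icc
          hgi.integrableOn hgi.integrableOn, hzero2, zero_add]
    have hmono2 : ∫ x in Icc (-1:ℝ) t, ((1/2 : ℝ) * x + (-c/2))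
        ≤ ∫ x in Icc (-1:ℝ) t, (x - c) * f x := by
      apply setIntegral_mono_on hlin_int hgi.integrableOn measurableSet_Icc
      intro x hx
      have h1 : x - c ≤ 0 := by rw [hc]; linarith [hx.2]
      have h2 := hcase x hx
      nlinarith [hf_nonneg x]
    have hval : ∫ x in Icc (-1:ℝ) t, ((1/2 : ℝ) * x + (-c/2)) = -c := by
      rw [TML.lin_int_Icc (-1) t (1/2) (-c/2) ht1, hc]; ring
    linarith [hmono2, hval, hsplit, hIic]
  · -- Case 2 : there is x₀ ≤ t with f x₀ > 1/2
    push_neg at hcase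
    obtain ⟨x₀, hx₀mem, hx₀⟩ := hcase
    set U : Set ℝ := {x : ℝ | x ∈ Icc (-1:ℝ) 1 ∧ 1/2 < f x} with hU
    have hx₀U : x₀ ∈ U := ⟨⟨hx₀mem.1, hx₀mem.2.trans ht2.le⟩, hx₀⟩
    have hUne : U.Nonempty := ⟨x₀, hx₀U⟩
    have hUbddA : BddAbove U := ⟨1, fun x hx => hx.1.2⟩
    have hUbddB : BddBelow U := ⟨-1, fun x hx => hx.1.1⟩
    set r : ℝ := sSup U with hrdef
    have hr1 : r ≤ 1 := csSup_le hUne (fun x hx => hx.1.2)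
    have hx₀r : x₀ ≤ r := le_csSup hUbddA hx₀U
    have hrm1 : (-1:ℝ) ≤ r := hx₀mem.1.trans hx₀r
    have hquasi := TML.quasi f hf_nonneg hf_lc
    have hgt : ∀ x, x₀ ≤ x → x < r → 1/2 < f x := by
      intro x hxl hxr
      obtain ⟨u, huU, hxu⟩ := exists_lt_of_lt_csSup hUne hxr
      have := hquasi x₀ x u hx₀mem.1 hxl hxu.le huU.1.2
      have hmin : 1/2 < min (f x₀) (f u) := lt_min hx₀ huU.2
      linarith
    have hle : ∀ x, r < x → f x ≤ 1/2 := by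
      intro x hxr
      by_cases hxI : x ∈ Icc (-1:ℝ) 1
      · by_contra hgt2
        push_neg at hgt2
        exact absurd (le_csSup hUbddA (⟨hxI, hgt2⟩ : x ∈ U)) (not_le.mpr hxr)
      · rw [hf_supp x hxI]; norm_num
    have hanti : ∀ x ∈ Icc r 1, ∀ y ∈ Icc r 1, x ≤ y → f y ≤ f x := by
      intro x hx y hy hxy
      by_contra hcon
      push_neg at hcon
      have hq := hquasi x₀ x y hx₀mem.1 (hx₀r.trans hx.1) hxy hy.2
      have hfx : 1/2 < f x := by
        rcases min_cases (f x₀) (f y) with ⟨heq, _⟩ | ⟨heq, hle2⟩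
        · rw [heq] at hq; linarith
        · rw [heq] at hq; linarith
      have hxler : x ≤ r := le_csSup hUbddA ⟨⟨hrm1.trans hx.1, hx.2⟩, hfx⟩
      have hxr : x = r := le_antisymm hxler hx.1
      have hfy : 1/2 < f y := by linarith
      have hyler : y ≤ r := le_csSup hUbddA ⟨⟨hrm1.trans (hx.1.trans hxy), hy.2⟩, hfy⟩
      have : y = r := le_antisymm hyler (hx.1.trans hxy)
      rw [hxr, this] at hcon
      exact absurd hcon (lt_irrefl _)
    rcases le_or_gt r t with hrt | htr
    · -- Subcase 2-i : r ≤ t, f antitone on [t,1]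
      rw [Ereduce, ← intervalIntegral.integral_of_le ht2.le]
      exact TML.antitone_refl f t 1 c ht2.le (by rw [hc]; ring)
        (fun x hx y hy hxy => hanti x ⟨hrt.trans hx.1, hx.2⟩ y ⟨hrt.trans hy.1, hy.2⟩ hxy)
        hgi.intervalIntegrable
    rcases le_or_gt r c with hrc | hcr
    · -- Subcase 2-ii : t < r ≤ c
      set ct : ℝ := (1 + r)/2 with hct
      have hsplit2 : ∫ x in Ioc t 1, (x - c) * f x
          = (∫ x in Ioc t r, (x - c) * f x) + ∫ x in Ioc r 1, (x - c) * f x := by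
        rw [← Ioc_union_Ioc_eq_Ioc htr.le hr1,
          setIntegral_union (Ioc_disjoint_Ioc_of_le le_rfl) measurableSet_Ioc
            hgi.integrableOn hgi.integrableOn]
      have hA : ∫ x in Ioc t r, (x - c) * f x
          ≤ ∫ x in Ioo t r, ((1/2 : ℝ) * x + (-c/2)) := by
        rw [integral_Ioc_eq_integral_Ioo]
        apply setIntegral_mono_on hgi.integrableOn
          ((((continuous_const.mul continuous_id).add continuous_const).integrableOn_Icc).mono_set
            Ioo_subset_Icc_self)
          measurableSet_Ioo
        intro x hx
        have h1 : x - c ≤ 0 := by linarith [hx.2]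
        have h2 : 1/2 < f x := hgt x (by linarith [hx.1, hx₀mem.2]) hx.2
        show (x - c) * f x ≤ 1/2 * x + -c/2
        nlinarith [mul_nonneg (neg_nonneg.mpr h1) (sub_nonneg.mpr h2.le)]
      have hAval : ∫ x in Ioo t r, ((1/2 : ℝ) * x + (-c/2))
          = (1/2) * (r^2 - t^2)/2 + (-c/2) * (r - t) :=
        TML.lin_int_Ioo t r (1/2) (-c/2) htr.le
      have hB2 : ∫ x in Ioc r 1, (x - ct) * f x ≤ 0 := by
        rw [← intervalIntegral.integral_of_le hr1]
        exact TML.antitone_refl f r 1 ct hr1 (by rw [hct]; ring) hanti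
          (by
            have : Integrable (fun x => (x - ct) * f x) := by
              have heq2 : (fun x => (x - ct) * f x) = fun x => x * f x - ct * f x :=
                funext (fun x => by ring)
              rw [heq2]; exact hxfi.sub (hfi.const_mul ct)
            exact this.intervalIntegrable)
      have hB3 : ∫ x in Ioc r 1, f x ≤ ∫ x in Ioc r 1, ((0:ℝ) * x + 1/2) := by
        apply setIntegral_mono_on hfi.integrableOn
          ((((continuous_const.mul continuous_id).add continuous_const).integrableOn_Icc).mono_set
            Ioc_subset_Icc_self)
          measurableSet_Ioc
        intro x hx
        have := hle x hx.1
        show f x ≤ 0 * x + 1/2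
        linarith
      have hB3val : ∫ x in Ioc r 1, ((0:ℝ) * x + 1/2)
          = (0:ℝ) * (1^2 - r^2)/2 + (1/2) * (1 - r) := TML.lin_int_Ioc r 1 0 (1/2) hr1
      have hB1 : ∫ x in Ioc r 1, (x - c) * f x
          = (∫ x in Ioc r 1, (x - ct) * f x) + (ct - c) * ∫ x in Ioc r 1, f x := by
        have heq3 : (fun x => (x - c) * f x)
            = fun x => (x - ct) * f x + (ct - c) * f x := funext (fun x => by ring)
        rw [heq3, integral_add ?h1 ((hfi.integrableOn).const_mul (ct - c)),
          MeasureTheory.integral_const_mul]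
        case h1 =>
          have heq2 : (fun x => (x - ct) * f x) = fun x => x * f x - ct * f x :=
            funext (fun x => by ring)
          rw [heq2]; exact (hxfi.sub (hfi.const_mul ct)).integrableOn
      have hctc : 0 ≤ ct - c := by rw [hct, hc]; linarith
      have hfnn : 0 ≤ ∫ x in Ioc r 1, f x :=
        setIntegral_nonneg measurableSet_Ioc (fun x _ => hf_nonneg x)
      have hB : ∫ x in Ioc r 1, (x - c) * f x ≤ (ct - c) * ((1/2) * (1 - r)) := by
        rw [hB1]
        have : (ct - c) * ∫ x in Ioc r 1, f x ≤ (ct - c) * ((1/2) * (1 - r)) := by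
          apply mul_le_mul_of_nonneg_left _ hctc
          rw [hB3val] at hB3; linarith
        linarith
      rw [Ereduce, hsplit2]
      have hfinal : (1/2) * (r^2 - t^2)/2 + (-c/2) * (r - t)
          + (ct - c) * ((1/2) * (1 - r)) = 0 := by rw [hct, hc]; ring
      linarith [hA, hB, hAval]
    · -- Subcase 2-iii : c < r
      have htc : t < c := by rw [hc]; linarith
      set l : ℝ := sInf U with hldef
      have hlm1 : -1 ≤ l := le_csInf hUne (fun x hx => hx.1.1)
      have hlx₀ : l ≤ x₀ := csInf_le hUbddB hx₀U
      have hlt : l ≤ t := hlx₀.trans hx₀mem.2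
      have hrl : 0 < r - l := by linarith
      set sl : ℝ := (r - c)/(r - l) with hsl
      have hsl_eq : sl * (r - l) = r - c := div_mul_cancel₀ _ hrl.ne'
      have hsl0 : 0 ≤ sl := div_nonneg (by linarith) hrl.le
      have hsl1 : sl ≤ 1 := (div_le_one hrl).mpr (by linarith)
      have hgt' : ∀ x, l < x → x < r → 1/2 < f x := by
        intro x hxl hxr
        obtain ⟨w, hwU, hwx⟩ := exists_lt_of_csInf_lt hUne hxl
        obtain ⟨u, huU, hxu⟩ := exists_lt_of_lt_csSup hUne hxr
        have := hquasi w x u hwU.1.1 hwx.le hxu.le huU.1.2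
        have hmin : 1/2 < min (f w) (f u) := lt_min hwU.2 huU.2
        linarith
      have hle_left : ∀ x, x < l → f x ≤ 1/2 := by
        intro x hxl
        by_cases hxI : x ∈ Icc (-1:ℝ) 1
        · by_contra hgt2
          push_neg at hgt2
          exact absurd (csInf_le hUbddB (⟨hxI, hgt2⟩ : x ∈ U)) (not_le.mpr hxl)
        · rw [hf_supp x hxI]; norm_num
      set ψ : ℝ → ℝ := fun x => if t < x then x - c else 0 with hψ
      -- pointwise inequality
      have hptw : ∀ x ∈ Icc (-1:ℝ) 1, (ψ x - sl * (x - l)) * (f x - 1/2) ≤ 0 := by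
        intro x hx
        rcases lt_or_ge x l with h | h
        · have hψx : ψ x = 0 := if_neg (not_lt.mpr (by linarith))
          rw [hψx]
          apply mul_nonpos_iff.mpr
          refine Or.inl ⟨?_, by linarith [hle_left x h]⟩
          nlinarith [mul_nonneg hsl0 (by linarith : (0:ℝ) ≤ l - x)]
        · rcases lt_or_ge x r with h2 | h2
          · rcases eq_or_lt_of_le h with heq | hlx
            · have hψx : ψ x = 0 := if_neg (not_lt.mpr (by linarith [heq.symm.le] ; ))
              rw [hψx, ← heq]
              simp
            · have hfx : 1/2 < f x := hgt' x hlx h2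
              apply mul_nonpos_iff.mpr
              refine Or.inr ⟨?_, by linarith⟩
              by_cases hxt : t < x
              · have hψx : ψ x = x - c := if_pos hxt
                rw [hψx]
                nlinarith [mul_nonneg (by linarith : (0:ℝ) ≤ 1 - sl)
                  (by linarith : (0:ℝ) ≤ r - x), hsl_eq]
              · have hψx : ψ x = 0 := if_neg hxt
                rw [hψx]
                nlinarith [mul_nonneg hsl0 (by linarith : (0:ℝ) ≤ x - l)]
          · have hxt : t < x := by linarith
            have hψx : ψ x = x - c := if_pos hxt
            rcases eq_or_lt_of_le h2 with heq | hrx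
            · rw [hψx, ← heq]
              have : r - c - sl * (r - l) = 0 := by rw [hsl_eq]; ring
              rw [show r - c - sl * (r - l) = 0 from this, zero_mul]
            · apply mul_nonpos_iff.mpr
              refine Or.inl ⟨?_, by linarith [hle x hrx]⟩
              rw [hψx]
              nlinarith [mul_nonneg (by linarith : (0:ℝ) ≤ 1 - sl)
                (by linarith : (0:ℝ) ≤ x - r), hsl_eq]
      -- integrability pieces on Icc (-1) 1
      have hψf_eq : (fun x => ψ x * f x) = (Ioi t).indicator (fun x => (x - c) * f x) := by
        funext x
        simp only [hψ, Set.indicator_apply, mem_Ioi]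
        by_cases hx : t < x
        · simp [hx]
        · simp [hx]
      have hψ_eq : ψ = (Ioi t).indicator (fun x => x - c) := by
        funext x
        simp only [hψ, Set.indicator_apply, mem_Ioi]
      have hψf_int : IntegrableOn (fun x => ψ x * f x) (Icc (-1:ℝ) 1) := by
        rw [hψf_eq]; exact (hgi.indicator measurableSet_Ioi).integrableOn
      have hψ_int : IntegrableOn ψ (Icc (-1:ℝ) 1) := by
        rw [hψ_eq]
        exact ((continuous_id.sub continuous_const).integrableOn_Icc).indicator
          measurableSet_Ioi
      have hLf_int : IntegrableOn (fun x => sl * (x - l) * f x) (Icc (-1:ℝ) 1) := by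
        rw [show (fun x => sl * (x - l) * f x)
            = fun x => sl * (x * f x) - (sl * l) * f x from funext fun x => by ring]
        exact ((hxfi.const_mul sl).sub (hfi.const_mul (sl * l))).integrableOn
      have hL_int : IntegrableOn (fun x => sl * (x - l)) (Icc (-1:ℝ) 1) :=
        (continuous_const.mul (continuous_id.sub continuous_const)).integrableOn_Icc
      -- values
      have hIf : ∫ x in Icc (-1:ℝ) 1, f x = 1 := by
        rw [setIntegral_eq_integral_of_forall_compl_eq_zero (fun x hx => hf_supp x hx)]
        exact hf_prob
      have hIxf : ∫ x in Icc (-1:ℝ) 1, x * f x = 0 := by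
        rw [setIntegral_eq_integral_of_forall_compl_eq_zero
          (fun x hx => by rw [hf_supp x hx, mul_zero])]
        exact hf_mean
      have hsub1 : Icc (-1:ℝ) t ⊆ Icc (-1:ℝ) 1 := Icc_subset_Icc le_rfl ht2.le
      have hsub2 : Ioc t (1:ℝ) ⊆ Icc (-1:ℝ) 1 := fun x hx => ⟨by linarith [hx.1], hx.2⟩
      have hdisj : Disjoint (Icc (-1:ℝ) t) (Ioc t 1) :=
        disjoint_left.mpr fun x h1 h2 => absurd h2.1 (not_lt.mpr h1.2)
      have hIccsplit : Icc (-1:ℝ) 1 = Icc (-1:ℝ) t ∪ Ioc t 1 :=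
        (Icc_union_Ioc_eq_Icc ht1 ht2.le).symm
      have hψval : ∫ x in Icc (-1:ℝ) 1, ψ x = 0 := by
        rw [hIccsplit, setIntegral_union hdisj measurableSet_Ioc
          (hψ_int.mono_set hsub1) (hψ_int.mono_set hsub2)]
        rw [setIntegral_eq_zero_of_forall_eq_zero
          (fun x hx => if_neg (not_lt.mpr hx.2))]
        rw [setIntegral_congr_fun measurableSet_Ioc
          (fun x hx => (if_pos hx.1 : ψ x = x - c))]
        rw [show (fun x => x - c) = fun x => (1:ℝ) * x + (-c) from funext fun x => by ring]
        rw [TML.lin_int_Ioc t 1 1 (-c) ht2.le, hc]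
        ring
      have hψfval : ∫ x in Icc (-1:ℝ) 1, ψ x * f x = ∫ x in Ioi t, (x - c) * f x := by
        rw [hIccsplit, setIntegral_union hdisj measurableSet_Ioc
          (hψf_int.mono_set hsub1) (hψf_int.mono_set hsub2)]
        rw [setIntegral_eq_zero_of_forall_eq_zero
          (fun x hx => by
            have hψx : ψ x = 0 := by simp only [hψ]; exact if_neg (not_lt.mpr hx.2)
            rw [hψx, zero_mul])]
        rw [setIntegral_congr_fun measurableSet_Ioc
          (fun x hx => by
            have hψx : ψ x = x - c := by simp only [hψ]; exact if_pos hx.1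
            show ψ x * f x = (x - c) * f x
            rw [hψx])]
        rw [Ereduce, zero_add]
      have hLfval : ∫ x in Icc (-1:ℝ) 1, sl * (x - l) * f x = -(sl * l) := by
        rw [show (fun x => sl * (x - l) * f x)
            = fun x => sl * (x * f x) - (sl * l) * f x from funext fun x => by ring]
        rw [integral_sub ((hxfi.const_mul sl).integrableOn)
          ((hfi.const_mul (sl * l)).integrableOn),
          MeasureTheory.integral_const_mul, MeasureTheory.integral_const_mul, hIxf, hIf]
        ring
      have hLval : ∫ x in Icc (-1:ℝ) 1, sl * (x - l) = -(2 * (sl * l)) := by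
        rw [show (fun x => sl * (x - l)) = fun x => sl * x + (-(sl * l)) from
          funext fun x => by ring]
        rw [TML.lin_int_Icc (-1) 1 sl (-(sl * l)) (by norm_num)]
        ring
      have hnonpos : ∫ x in Icc (-1:ℝ) 1, (ψ x - sl * (x - l)) * (f x - 1/2) ≤ 0 :=
        setIntegral_nonpos measurableSet_Icc hptw
      have e0 : ∫ x in Icc (-1:ℝ) 1, (ψ x - sl * (x - l)) * (f x - 1/2)
          = ∫ x in Icc (-1:ℝ) 1, ((ψ x * f x - (1/2) * ψ x)
              - (sl * (x - l) * f x - (1/2) * (sl * (x - l)))) :=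
        setIntegral_congr_fun measurableSet_Icc (fun x _ => by ring)
      have e1 : ∫ x in Icc (-1:ℝ) 1, ((ψ x * f x - (1/2) * ψ x)
              - (sl * (x - l) * f x - (1/2) * (sl * (x - l))))
          = (∫ x in Icc (-1:ℝ) 1, (ψ x * f x - (1/2) * ψ x))
            - ∫ x in Icc (-1:ℝ) 1, (sl * (x - l) * f x - (1/2) * (sl * (x - l))) :=
        integral_sub (hψf_int.sub (hψ_int.const_mul (1/2)))
          (hLf_int.sub (hL_int.const_mul (1/2)))
      have e2 : ∫ x in Icc (-1:ℝ) 1, (ψ x * f x - (1/2) * ψ x)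
          = (∫ x in Icc (-1:ℝ) 1, ψ x * f x) - ∫ x in Icc (-1:ℝ) 1, (1/2) * ψ x :=
        integral_sub hψf_int (hψ_int.const_mul (1/2))
      have e3 : ∫ x in Icc (-1:ℝ) 1, (sl * (x - l) * f x - (1/2) * (sl * (x - l)))
          = (∫ x in Icc (-1:ℝ) 1, sl * (x - l) * f x)
            - ∫ x in Icc (-1:ℝ) 1, (1/2) * (sl * (x - l)) :=
        integral_sub hLf_int (hL_int.const_mul (1/2))
      have e4 : ∫ x in Icc (-1:ℝ) 1, (1/2 : ℝ) * ψ x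
          = (1/2) * ∫ x in Icc (-1:ℝ) 1, ψ x := MeasureTheory.integral_const_mul _ _
      have e5 : ∫ x in Icc (-1:ℝ) 1, (1/2 : ℝ) * (sl * (x - l))
          = (1/2) * ∫ x in Icc (-1:ℝ) 1, sl * (x - l) := MeasureTheory.integral_const_mul _ _
      have hexp2 : ∫ x in Icc (-1:ℝ) 1, (ψ x - sl * (x - l)) * (f x - 1/2)
          = (∫ x in Icc (-1:ℝ) 1, ψ x * f x) - (1/2) * (∫ x in Icc (-1:ℝ) 1, ψ x)
            - (∫ x in Icc (-1:ℝ) 1, sl * (x - l) * f x)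
            + (1/2) * (∫ x in Icc (-1:ℝ) 1, sl * (x - l)) := by
        rw [e0, e1, e2, e3, e4, e5]; ring
      rw [hexp2, hψfval, hψval, hLfval, hLval] at hnonpos
      linarith
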